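/- arXiv:1808.10213 — 5 statements merged into one kernel-verified Lean document; each statement's English description precedes it below -/
import Mathlib

section
/- The deterministic flow φ_t(x,y) defined piecewise by φ_t(x,y) = (x, h(t,x,y)) for t ≤ τ(x,y) and φ_t(x,y) = (e^{τ(x,y)−t} x, 0) for t ≥ τ(x,y) satisfies the semigroup (cocycle) property φ_{t+s}(x,y) = φ_t(φ_s(x,y)) for all s,t ≥ 0, where h(t,x,y) = (y−c(x))e^t + c(x), c(x) = 1 + min(dist(x,Γ),1), Γ = {−3,−1,1,3}, and τ(x,y) = inf{s ≥ 0 : h(s,x,y) = 0}. -/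
noncomputable section

/-- `Γ = {−3,−1,1,3}`. -/
def Gam : Set ℝ := {-3, -1, 1, 3}

/-- `c(x) = 1 + min(dist(x,Γ), 1)`. -/
noncomputable def c (x : ℝ) : ℝ := 1 + min (Metric.infDist x Gam) 1

/-- The explicit solution `h(t,x,y) = (y − c(x)) eᵗ + c(x)`. -/
noncomputable def hh (t x y : ℝ) : ℝ := (y - c x) * Real.exp t + c x

/-- Hitting time of 0. -/
noncomputable def tau (x y : ℝ) : ℝ := sInf {s : ℝ | 0 ≤ s ∧ hh s x y = 0}

/-- The deterministic flow on `E = ℝ × [0,1]`: for `t ≤ τ(x,y)` (equivalently,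
while `h(t,x,y) ≥ 0`, since `h(·,x,y)` is nonincreasing for `y ∈ [0,1]`) it is
`(x, h(t,x,y))`, and for `t ≥ τ(x,y)` it is `(x e^{τ(x,y)−t}, 0)`. -/
noncomputable def phi (t : ℝ) (p : ℝ × ℝ) : ℝ × ℝ :=
  if 0 ≤ hh t p.1 p.2 then (p.1, hh t p.1 p.2)
  else (p.1 * Real.exp (tau p.1 p.2 - t), 0)

lemma one_le_c (x : ℝ) : 1 ≤ c x := by
  have h : 0 ≤ min (Metric.infDist x Gam) 1 :=
    le_min Metric.infDist_nonneg zero_le_one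
  unfold c; linarith

lemma c_pos (x : ℝ) : 0 < c x := lt_of_lt_of_le one_pos (one_le_c x)

lemma hh_add (s t x y : ℝ) : hh t x (hh s x y) = hh (t + s) x y := by
  simp only [hh, Real.exp_add]; ring

lemma tau_eq (x y : ℝ) (h0 : 0 ≤ y) (h1 : y < c x) :
    tau x y = Real.log (c x / (c x - y)) := by
  have hc : 0 < c x := c_pos x
  have hcy : 0 < c x - y := by linarith
  have hratio : 1 ≤ c x / (c x - y) := (one_le_div hcy).mpr (by linarith)
  have hset : {s : ℝ | 0 ≤ s ∧ hh s x y = 0} = {Real.log (c x / (c x - y))} := by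
    ext s
    simp only [Set.mem_setOf_eq, Set.mem_singleton_iff]
    constructor
    · rintro ⟨hs, hz⟩
      have hes : Real.exp s = c x / (c x - y) := by
        unfold hh at hz
        field_simp
        nlinarith
      rw [← hes, Real.log_exp]
    · rintro rfl
      refine ⟨Real.log_nonneg hratio, ?_⟩
      unfold hh
      rw [Real.exp_log (by positivity)]
      field_simp
      ring
  rw [tau, hset, csInf_singleton]

/-- the flow property: `φ₀ = id` on `E` and
`φ_{t+s}(x,y) = φ_t(φ_s(x,y))` for all `s,t ≥ 0` and `(x,y) ∈ E = ℝ × [0,1]`. -/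
theorem flow_property :
    (∀ p : ℝ × ℝ, p.2 ∈ Set.Icc (0:ℝ) 1 → phi 0 p = p) ∧
    (∀ s t : ℝ, 0 ≤ s → 0 ≤ t → ∀ p : ℝ × ℝ, p.2 ∈ Set.Icc (0:ℝ) 1 →
      phi (t + s) p = phi t (phi s p)) := by
  constructor
  · intro p hp
    have h0 : hh 0 p.1 p.2 = p.2 := by simp [hh]
    simp [phi, h0, hp.1]
  · intro s t hs ht p hp
    obtain ⟨x, y⟩ := p
    have hy0 : (0:ℝ) ≤ y := hp.1
    have hy1 : y ≤ 1 := hp.2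
    have hc1 := one_le_c x
    have hyc : y ≤ c x := le_trans hy1 hc1
    by_cases hS : 0 ≤ hh s x y
    · have hphis : phi s (x, y) = (x, hh s x y) := by simp [phi, hS]
      rw [hphis]
      by_cases hT : 0 ≤ hh (t + s) x y
      · have hrec : hh t x (hh s x y) = hh (t + s) x y := hh_add s t x y
        simp [phi, hT, hrec]
      · push_neg at hT
        have hylt : y < c x := by
          rcases lt_or_eq_of_le hyc with h | h
          · exact h
          · exfalso; rw [h] at hT; unfold hh at hT; nlinarith
        have hcy : 0 < c x - y := by linarith
        have hrec : hh t x (hh s x y) = hh (t + s) x y := hh_add s t x y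
        have hy'lt : hh s x y < c x := by
          unfold hh
          nlinarith [Real.exp_pos s]
        have hcy' : c x - hh s x y = (c x - y) * Real.exp s := by
          unfold hh; ring
        have htau' : tau x (hh s x y) = tau x y - s := by
          rw [tau_eq x (hh s x y) hS hy'lt, tau_eq x y hy0 hylt, hcy',
            Real.log_div (ne_of_gt (c_pos x)) (by positivity),
            Real.log_mul (ne_of_gt hcy) (ne_of_gt (Real.exp_pos s)),
            Real.log_exp, Real.log_div (ne_of_gt (c_pos x)) (ne_of_gt hcy)]
          ring
        have h1 : phi (t + s) (x, y) = (x * Real.exp (tau x y - (t + s)), 0) := by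
          simp [phi, not_le.mpr hT]
        have h2 : phi t (x, hh s x y) = (x * Real.exp (tau x (hh s x y) - t), 0) := by
          simp only [phi]
          rw [if_neg]
          simp only [hrec]
          exact not_le.mpr hT
        rw [h1, h2, htau']
        ring_nf
    · push_neg at hS
      have hylt : y < c x := by
        rcases lt_or_eq_of_le hyc with h | h
        · exact h
        · exfalso; rw [h] at hS; unfold hh at hS; nlinarith
      have hT : hh (t + s) x y < 0 := by
        have hle : Real.exp s ≤ Real.exp (t + s) := Real.exp_le_exp.mpr (by linarith)
        unfold hh at hS ⊢; nlinarith
      have hphis : phi s (x, y) = (x * Real.exp (tau x y - s), 0) := by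
        simp [phi, not_le.mpr hS]
      rw [hphis]
      set x' := x * Real.exp (tau x y - s) with hx'
      have hcx' : 0 < c x' := c_pos x'
      have hh0 : ∀ u : ℝ, hh u x' 0 = c x' * (1 - Real.exp u) := by
        intro u; unfold hh; ring
      have h1 : phi (t + s) (x, y) = (x * Real.exp (tau x y - (t + s)), 0) := by
        simp [phi, not_le.mpr hT]
      rcases eq_or_lt_of_le ht with h | h
      · subst h
        have h00 : hh 0 x' 0 = 0 := by rw [hh0]; simp
        have : phi 0 (x', 0) = (x', 0) := by simp [phi, h00]
        rw [h1, this, hx']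
        norm_num
      · have hneg : hh t x' 0 < 0 := by
          rw [hh0]
          have he := Real.add_one_le_exp t
          nlinarith
        have htau0 : tau x' 0 = 0 := by
          rw [tau_eq x' 0 le_rfl hcx', sub_zero, div_self (ne_of_gt hcx'),
            Real.log_one]
        have h2 : phi t (x', 0) = (x' * Real.exp (tau x' 0 - t), 0) := by
          simp [phi, not_le.mpr hneg]
        rw [h1, h2, htau0, hx', mul_assoc, ← Real.exp_add]
        ring_nf
end
end

section
/- For the deterministic flow φ_t on E = ℝ × [0,1] (with the noise set to zero), every initial point (x,y) with ¬(y = 1 and x ∈ Γ) satisfies φ_t(x,y) → (0,0) in the Euclidean metric as t → ∞; and for γ ∈ Γ, φ_t(γ,1) = (γ,1) for all t ≥ 0. -/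
noncomputable section

/-- (a) every point `(x,y) ∈ E` with `c(x) > y` (i.e. not of the form
`(γ,1)`, `γ ∈ Γ`) satisfies `φ_t(x,y) → (0,0)` as `t → ∞` (Euclidean topology);
(b) the points `(γ,1)`, `γ ∈ Γ`, are fixed points of the flow. -/
theorem convergence_and_fixed_points :
    (∀ x y : ℝ, y ∈ Set.Icc (0:ℝ) 1 → y < c x →
      Filter.Tendsto (fun t => phi t (x, y)) Filter.atTop (nhds ((0:ℝ), (0:ℝ)))) ∧
    (∀ γ ∈ Gam, ∀ t : ℝ, 0 ≤ t → phi t (γ, 1) = (γ, 1)) := by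
  constructor
  · intro x y hy hlt
    -- h(t,x,y) → -∞
    have hpos : 0 < c x - y := by linarith
    have h1 : Filter.Tendsto (fun t => (c x - y) * Real.exp t) Filter.atTop Filter.atTop :=
      Filter.Tendsto.const_mul_atTop hpos Real.tendsto_exp_atTop
    have h2 : Filter.Tendsto (fun t => (c x - y) * Real.exp t - c x) Filter.atTop Filter.atTop :=
      Filter.tendsto_atTop_add_const_right _ _ h1
    have hneg : Filter.Tendsto (fun t => hh t x y) Filter.atTop Filter.atBot := by
      refine (Filter.tendsto_neg_atTop_atBot.comp h2).congr fun t => ?_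
      simp [hh, Function.comp]; ring
    have hev : ∀ᶠ t in Filter.atTop, hh t x y < 0 := hneg.eventually_lt_atBot 0
    -- the tail expression tends to (0,0)
    have htau : Filter.Tendsto (fun t : ℝ => tau x y - t) Filter.atTop Filter.atBot := by
      have : Filter.Tendsto (fun t : ℝ => t - tau x y) Filter.atTop Filter.atTop :=
        Filter.tendsto_atTop_add_const_right _ _ Filter.tendsto_id
      refine (Filter.tendsto_neg_atTop_atBot.comp this).congr fun t => ?_
      simp [Function.comp]
    have hexp : Filter.Tendsto (fun t : ℝ => Real.exp (tau x y - t)) Filter.atTop (nhds 0) :=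
      Real.tendsto_exp_atBot.comp htau
    have hfst : Filter.Tendsto (fun t : ℝ => x * Real.exp (tau x y - t)) Filter.atTop (nhds 0) := by
      simpa using hexp.const_mul x
    have htail : Filter.Tendsto (fun t : ℝ => ((x * Real.exp (tau x y - t) : ℝ), (0:ℝ)))
        Filter.atTop (nhds ((0:ℝ), (0:ℝ))) :=
      hfst.prodMk_nhds tendsto_const_nhds
    refine htail.congr' ?_
    filter_upwards [hev] with t ht
    simp only [phi]
    rw [if_neg (by simpa using not_le.mpr ht)]
  · intro γ hγ t ht
    have hc : c γ = 1 := by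
      have : Metric.infDist γ Gam = 0 :=
        Metric.infDist_zero_of_mem hγ
      simp [c, this]
    have : hh t γ 1 = 1 := by simp [hh, hc]
    simp [phi, this]
end
end

section
/- For the deterministic flow φ_t on E = ℝ × [0,1] and for each γ ∈ {1,3}, the set A_γ = ([−γ,γ] × {0}) ∪ ({−γ} × [0,1]) ∪ ({γ} × [0,1]) is strictly invariant: φ_t(A_γ) = A_γ for all t ≥ 0. -/
noncomputable section

/-- The candidate attractor `A_γ = ([−γ,γ] × {0}) ∪ ({−γ} × [0,1]) ∪ ({γ} × [0,1])`. -/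
def Ag (γ : ℝ) : Set (ℝ × ℝ) :=
  (Set.Icc (-γ) γ ×ˢ {0}) ∪ ({-γ} ×ˢ Set.Icc (0:ℝ) 1) ∪ ({γ} ×ˢ Set.Icc (0:ℝ) 1)

lemma c_of_mem {x : ℝ} (hx : x ∈ Gam) : c x = 1 := by
  unfold c
  rw [Metric.infDist_zero_of_mem hx]
  simp

lemma tau_zero (x : ℝ) : tau x 0 = 0 := by
  have hset : {s : ℝ | 0 ≤ s ∧ hh s x 0 = 0} = {0} := by
    ext s
    simp only [Set.mem_setOf_eq, Set.mem_singleton_iff, hh]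
    constructor
    · rintro ⟨hs, h0⟩
      have hc : (1:ℝ) ≤ c x := one_le_c x
      have he : Real.exp s = 1 := by nlinarith [Real.exp_pos s]
      exact Real.exp_eq_exp.mp (by rw [he, Real.exp_zero])
    · rintro rfl
      refine ⟨le_refl 0, ?_⟩
      simp
  rw [tau, hset, csInf_singleton]

lemma tau_vert {x y : ℝ} (hc : c x = 1) (hy0 : 0 ≤ y) (hy1 : y < 1) :
    tau x y = Real.log (1 - y)⁻¹ := by
  have h1y : 0 < 1 - y := by linarith
  have hτ0 : 0 ≤ Real.log (1 - y)⁻¹ := by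
    apply Real.log_nonneg
    rw [le_inv_comm₀ one_pos h1y]
    linarith
  have hset : {s : ℝ | 0 ≤ s ∧ hh s x y = 0} = {Real.log (1 - y)⁻¹} := by
    ext s
    simp only [Set.mem_setOf_eq, Set.mem_singleton_iff, hh, hc]
    constructor
    · rintro ⟨hs, h0⟩
      have he : Real.exp s = (1 - y)⁻¹ := by
        have h2 : Real.exp s * (1 - y) = 1 := by linear_combination -h0
        exact eq_inv_of_mul_eq_one_left h2
      rw [← he, Real.log_exp]
    · rintro rfl
      refine ⟨hτ0, ?_⟩
      rw [Real.exp_log (by positivity)]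
      field_simp
      ring
  rw [tau, hset, csInf_singleton]

lemma phi_of_nonneg {t a b : ℝ} (h : 0 ≤ hh t a b) :
    phi t (a, b) = (a, hh t a b) := if_pos h

lemma phi_of_neg {t a b : ℝ} (h : ¬ 0 ≤ hh t a b) :
    phi t (a, b) = (a * Real.exp (tau a b - t), 0) := if_neg h

lemma mem_Ag_vert {γ a y : ℝ} (ha : a = γ ∨ a = -γ) (hy : y ∈ Set.Icc (0:ℝ) 1) :
    (a, y) ∈ Ag γ := by
  rcases ha with rfl | rfl
  · exact Or.inr ⟨rfl, hy⟩
  · exact Or.inl (Or.inr ⟨rfl, hy⟩)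

lemma mem_Ag_bot {γ x : ℝ} (hx : x ∈ Set.Icc (-γ) γ) : (x, 0) ∈ Ag γ :=
  Or.inl (Or.inl ⟨hx, rfl⟩)

lemma phi_bot_mem {γ x t : ℝ} (hγ : 0 < γ) (hx : x ∈ Set.Icc (-γ) γ) (ht : 0 ≤ t) :
    phi t (x, 0) ∈ Ag γ := by
  have hc := one_le_c x
  have hexp : 1 ≤ Real.exp t := Real.one_le_exp ht
  have hhle : hh t x 0 ≤ 0 := by
    simp only [hh]; nlinarith
  by_cases h : 0 ≤ hh t x 0
  · have h0 : hh t x 0 = 0 := le_antisymm hhle h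
    rw [phi_of_nonneg (a := x) (b := 0) h, h0]
    exact mem_Ag_bot hx
  · rw [phi_of_neg (a := x) (b := 0) h]
    simp only [tau_zero]
    apply mem_Ag_bot
    have he1 : Real.exp (0 - t) ≤ 1 := Real.exp_le_one_iff.mpr (by linarith)
    have he0 : 0 < Real.exp (0 - t) := Real.exp_pos _
    constructor <;> nlinarith [hx.1, hx.2]

lemma phi_vert_mem {γ a y t : ℝ} (ha : a = γ ∨ a = -γ) (hγ : 0 < γ) (hc : c a = 1)
    (hy : y ∈ Set.Icc (0:ℝ) 1) (ht : 0 ≤ t) : phi t (a, y) ∈ Ag γ := by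
  have hexp : 1 ≤ Real.exp t := Real.one_le_exp ht
  by_cases h : 0 ≤ hh t a y
  · rw [phi_of_nonneg (a := a) (b := y) h]
    apply mem_Ag_vert ha
    refine ⟨h, ?_⟩
    simp only [hh, hc]
    nlinarith [hy.2]
  · rw [phi_of_neg (a := a) (b := y) h]
    have hneg : (y - c a) * Real.exp t + c a < 0 := by
      simpa [hh] using not_le.mp h
    have hy1 : y < 1 := by nlinarith [hc]
    have h1y : 0 < 1 - y := by linarith
    have hτ := tau_vert hc hy.1 hy1
    have hτlt : tau a y < t := by
      rw [hτ]
      have heτ : Real.exp (Real.log (1 - y)⁻¹) = (1 - y)⁻¹ := Real.exp_log (by positivity)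
      have hinv : (1 - y)⁻¹ * (1 - y) = 1 := inv_mul_cancel₀ (ne_of_gt h1y)
      have : Real.exp (Real.log (1 - y)⁻¹) < Real.exp t := by
        rw [heτ]
        nlinarith [hc]
      exact Real.exp_lt_exp.mp this
    have he1 : Real.exp (tau a y - t) ≤ 1 := Real.exp_le_one_iff.mpr (by linarith)
    have he0 : 0 < Real.exp (tau a y - t) := Real.exp_pos _
    apply mem_Ag_bot
    rcases ha with rfl | rfl <;> constructor <;> nlinarith

lemma vert_preimage {a y t : ℝ} (hc : c a = 1) (hy : y ∈ Set.Icc (0:ℝ) 1) (ht : 0 ≤ t) :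
    1 + (y - 1) * Real.exp (-t) ∈ Set.Icc (0:ℝ) 1 ∧
      phi t (a, 1 + (y - 1) * Real.exp (-t)) = (a, y) := by
  have he0 : 0 < Real.exp (-t) := Real.exp_pos _
  have he1 : Real.exp (-t) ≤ 1 := Real.exp_le_one_iff.mpr (by linarith)
  have hprod : Real.exp (-t) * Real.exp t = 1 := by
    rw [← Real.exp_add]; simp
  have hcomp : hh t a (1 + (y - 1) * Real.exp (-t)) = y := by
    simp only [hh, hc]
    linear_combination (y - 1) * hprod
  constructor
  · exact ⟨by nlinarith [hy.1, hy.2], by nlinarith [hy.1, hy.2]⟩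
  · rw [phi_of_nonneg (a := a) (b := 1 + (y - 1) * Real.exp (-t)) (by rw [hcomp]; exact hy.1)]
    simp only [hcomp]

lemma reach_bottom {γ a x t : ℝ} (ha : a = γ ∨ a = -γ) (hγ : 0 < γ)
    (hc : c a = 1) (hr0 : 0 < x / a) (hr1 : x / a ≤ 1)
    (hrt : Real.exp (-t) < x / a) (ht : 0 ≤ t) :
    ∃ q ∈ Ag γ, phi t q = (x, 0) := by
  have ha0 : a ≠ 0 := by
    rcases ha with rfl | rfl
    · exact ne_of_gt hγ
    · exact ne_of_lt (by linarith)
  set r := x / a with hrdef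
  have hxar : x = a * r := by rw [hrdef]; field_simp
  have hlr : Real.exp (Real.log r) = r := Real.exp_log hr0
  have hlt : -t < Real.log r := (Real.lt_log_iff_exp_lt hr0).mpr hrt
  have hle : Real.log r ≤ 0 := Real.log_nonpos (le_of_lt hr0) hr1
  set τ0 := t + Real.log r with hτ0def
  have hτ0pos : 0 < τ0 := by simp only [hτ0def]; linarith
  have hτ0le : τ0 ≤ t := by simp only [hτ0def]; linarith
  set y' := 1 - Real.exp (-τ0) with hy'def
  have heτ0 : 0 < Real.exp (-τ0) := Real.exp_pos _
  have heτ1 : Real.exp (-τ0) ≤ 1 := Real.exp_le_one_iff.mpr (by linarith)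
  have hy'mem : y' ∈ Set.Icc (0:ℝ) 1 := ⟨by simp only [hy'def]; linarith,
    by simp only [hy'def]; linarith⟩
  have hy'lt : y' < 1 := by simp only [hy'def]; linarith
  have hprod : Real.exp (-τ0) * Real.exp t = Real.exp (-Real.log r) := by
    rw [← Real.exp_add]; congr 1; simp only [hτ0def]; ring
  have hinvr : Real.exp (-Real.log r) = r⁻¹ := by
    rw [Real.exp_neg, hlr]
  have hcomp : hh t a y' = 1 - r⁻¹ := by
    simp only [hh, hc, hy'def]
    rw [show (1 - Real.exp (-τ0) - 1) * Real.exp t = -(Real.exp (-τ0) * Real.exp t) by ring,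
      hprod, hinvr]
    ring
  have hrinv : 1 ≤ r⁻¹ := (one_le_inv₀ hr0).mpr hr1
  refine ⟨(a, y'), mem_Ag_vert ha hy'mem, ?_⟩
  rcases eq_or_lt_of_le hr1 with hreq | hrlt
  · -- r = 1 : lands exactly at time t, first branch with hh = 0
    have hh0 : hh t a y' = 0 := by rw [hcomp, hreq]; simp
    rw [phi_of_nonneg (a := a) (b := y') hh0.ge]
    simp only [hh0]
    rw [hxar, hreq]
    simp
  · -- r < 1 : second branch
    have hhneg : hh t a y' < 0 := by
      rw [hcomp]
      have : 1 < r⁻¹ := (one_lt_inv₀ hr0).mpr hrlt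
      linarith
    rw [phi_of_neg (a := a) (b := y') (not_le.mpr hhneg)]
    have htau : tau a y' = τ0 := by
      rw [tau_vert hc hy'mem.1 hy'lt]
      have : (1 - y')⁻¹ = Real.exp τ0 := by
        simp only [hy'def]
        rw [show (1:ℝ) - (1 - Real.exp (-τ0)) = Real.exp (-τ0) by ring, Real.exp_neg, inv_inv]
      rw [this, Real.log_exp]
    rw [htau]
    have : Real.exp (τ0 - t) = r := by
      rw [show τ0 - t = Real.log r by simp only [hτ0def]; ring, hlr]
    simp only [this]
    rw [← hxar]

/-- for `γ ∈ {1,3}`, the set `A_γ` is strictly invariant: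
`φ_t(A_γ) = A_γ` for all `t ≥ 0`. -/
theorem A_strictly_invariant (γ : ℝ) (hγ : γ ∈ ({1, 3} : Set ℝ)) :
    ∀ t : ℝ, 0 ≤ t → phi t '' Ag γ = Ag γ := by
  have hγpos : 0 < γ := by rcases hγ with h | h <;> rw [h] <;> norm_num
  have hγmem : γ ∈ Gam := by
    rcases hγ with h | h <;> rw [h] <;> simp [Gam] <;> norm_num
  have hγmem' : -γ ∈ Gam := by
    rcases hγ with h | h <;> rw [h] <;> simp [Gam] <;> norm_num
  have hcγ : c γ = 1 := c_of_mem hγmem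
  have hcγ' : c (-γ) = 1 := c_of_mem hγmem'
  intro t ht
  apply Set.Subset.antisymm
  · rintro _ ⟨q, hq, rfl⟩
    obtain ⟨x, y⟩ := q
    rcases hq with (⟨hx, hy⟩ | ⟨hx, hy⟩) | ⟨hx, hy⟩
    · simp only [Set.mem_singleton_iff] at hy
      subst hy
      exact phi_bot_mem hγpos hx ht
    · simp only [Set.mem_singleton_iff] at hx
      subst hx
      exact phi_vert_mem (Or.inr rfl) hγpos hcγ' hy ht
    · simp only [Set.mem_singleton_iff] at hx
      subst hx
      exact phi_vert_mem (Or.inl rfl) hγpos hcγ hy ht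
  · rintro ⟨x, y⟩ hp
    rcases hp with (⟨hx, hy⟩ | ⟨hx, hy⟩) | ⟨hx, hy⟩
    · -- bottom piece
      simp only [Set.mem_singleton_iff] at hy
      subst hy
      rcases le_or_gt (|x| * Real.exp t) γ with hcase | hcase
      · -- preimage (x e^t, 0)
        refine ⟨(x * Real.exp t, 0), mem_Ag_bot ?_, ?_⟩
        · have h1 := abs_le.mp (le_of_eq (rfl : |x| = |x|))
          have habs : |x * Real.exp t| ≤ γ := by
            rw [abs_mul, abs_of_pos (Real.exp_pos t)]; exact hcase
          exact abs_le.mp habs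
        · have hc := one_le_c (x * Real.exp t)
          have hexp : 1 ≤ Real.exp t := Real.one_le_exp ht
          have hhle : hh t (x * Real.exp t) 0 ≤ 0 := by
            simp only [hh]; nlinarith
          by_cases h : 0 ≤ hh t (x * Real.exp t) 0
          · have h0 : hh t (x * Real.exp t) 0 = 0 := le_antisymm hhle h
            have hh0' : c (x * Real.exp t) * (1 - Real.exp t) = 0 := by
              have := h0; simp only [hh] at this; linarith [this]
            have hexp1 : Real.exp t = 1 := by nlinarith
            rw [phi_of_nonneg (a := x * Real.exp t) (b := 0) h, h0, hexp1]
            simp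
          · rw [phi_of_neg (a := x * Real.exp t) (b := 0) h]
            simp only [tau_zero]
            have : x * Real.exp t * Real.exp (0 - t) = x := by
              rw [mul_assoc, ← Real.exp_add]; simp
            rw [this]
      · -- |x| e^t > γ : come down a vertical wall
        have hx0 : x ≠ 0 := by
          intro h; rw [h] at hcase; simp at hcase; linarith
        have hprod : Real.exp (-t) * Real.exp t = 1 := by
          rw [← Real.exp_add]; simp
        rcases lt_or_gt_of_ne hx0 with hneg | hpos
        · -- x < 0, use a = -γ
          have habs : |x| = -x := abs_of_neg hneg
          rw [habs] at hcase
          have hrw : x / -γ = -x / γ := by ring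
          apply reach_bottom (Or.inr rfl) hγpos hcγ' (a := -γ) (x := x) (t := t)
          · rw [hrw]; exact div_pos (by linarith) hγpos
          · rw [hrw, div_le_one hγpos]; linarith [hx.1]
          · rw [hrw, lt_div_iff₀ hγpos]
            nlinarith [Real.exp_pos (-t)]
          · exact ht
        · -- x > 0, use a = γ
          have habs : |x| = x := abs_of_pos hpos
          rw [habs] at hcase
          apply reach_bottom (Or.inl rfl) hγpos hcγ (a := γ) (x := x) (t := t)
          · exact div_pos hpos hγpos
          · rw [div_le_one hγpos]; exact hx.2
          · rw [lt_div_iff₀ hγpos]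
            nlinarith [Real.exp_pos (-t)]
          · exact ht
    · -- left wall
      simp only [Set.mem_singleton_iff] at hx
      obtain ⟨hmem, heq⟩ := vert_preimage (a := x) (by rw [hx]; exact hcγ') hy ht
      exact ⟨(x, 1 + (y - 1) * Real.exp (-t)), mem_Ag_vert (Or.inr hx) hmem, heq⟩
    · -- right wall
      simp only [Set.mem_singleton_iff] at hx
      obtain ⟨hmem, heq⟩ := vert_preimage (a := x) (by rw [hx]; exact hcγ) hy ht
      exact ⟨(x, 1 + (y - 1) * Real.exp (-t)), mem_Ag_vert (Or.inl hx) hmem, heq⟩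
end
end

section
/- For each γ ∈ {1,3}, the set A_γ = ([−γ,γ] × {0}) ∪ ({−γ} × [0,1]) ∪ ({γ} × [0,1]) absorbs every point of E under the deterministic flow: for every (x,y) ∈ E there exists T ≥ 0 such that φ_t(x,y) ∈ A_γ for all t ≥ T, except when (x,y) = (γ', 1) with γ' ∈ Γ \ {−γ, γ}. -/
noncomputable section

lemma c_ge_one (x : ℝ) : (1:ℝ) ≤ c x := by
  have h0 : 0 ≤ min (Metric.infDist x Gam) 1 :=
    le_min Metric.infDist_nonneg zero_le_one
  unfold c; linarith

/-- for `γ ∈ {1,3}`, the set `A_γ` absorbs every point of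
`E = ℝ × [0,1]`, except the fixed points `(γ',1)` with `γ' ∈ Γ \ {−γ,γ}`:
there is a `T ≥ 0` after which the trajectory stays in `A_γ` forever. -/
theorem A_absorbs_points (γ : ℝ) (hγ : γ ∈ ({1, 3} : Set ℝ)) :
    ∀ x y : ℝ, y ∈ Set.Icc (0:ℝ) 1 → ¬(y = 1 ∧ x ∈ Gam \ {-γ, γ}) →
      ∃ T : ℝ, 0 ≤ T ∧ ∀ t : ℝ, T ≤ t → phi t (x, y) ∈ Ag γ := by
  have hγ1 : (1:ℝ) ≤ γ := by rcases hγ with h | h <;> simp_all <;> norm_num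
  intro x y hy hne
  have hc1 : (1:ℝ) ≤ c x := c_ge_one x
  have hycx : y ≤ c x := le_trans hy.2 hc1
  rcases eq_or_lt_of_le hycx with heq | hlt
  · -- y = c x : fixed point case
    have hy1 : y = 1 := le_antisymm hy.2 (by rw [heq]; exact hc1)
    have hcx : c x = 1 := by rw [← heq, hy1]
    -- c x = 1 implies x ∈ Gam
    have hmin : min (Metric.infDist x Gam) 1 = 0 := by
      unfold c at hcx; linarith
    have hd0 : Metric.infDist x Gam = 0 := by
      by_contra h
      have h1 : 0 < Metric.infDist x Gam :=
        lt_of_le_of_ne Metric.infDist_nonneg (Ne.symm h)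
      have := lt_min h1 one_pos
      rw [hmin] at this
      exact lt_irrefl 0 this
    have hGc : IsClosed Gam := by
      have : Gam = {-3, -1, 1, 3} := rfl
      rw [this]
      exact (((Set.finite_singleton (3:ℝ)).insert 1).insert (-1)).insert (-3) |>.isClosed
    have hGne : Gam.Nonempty := ⟨1, by simp [Gam]⟩
    have hxG : x ∈ Gam := (hGc.mem_iff_infDist_zero hGne).mpr hd0
    have hx : x = -γ ∨ x = γ := by
      by_contra h
      push_neg at h
      exact hne ⟨hy1, hxG, by simp [h.1, h.2]⟩
    refine ⟨0, le_refl _, fun t ht => ?_⟩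
    have hhh : hh t x y = 1 := by unfold hh; rw [hy1, hcx]; ring
    unfold phi
    simp only [hhh]
    rw [if_pos (by norm_num : (0:ℝ) ≤ 1)]
    rcases hx with h | h
    · exact Or.inl (Or.inr ⟨by simp [h], by norm_num⟩)
    · exact Or.inr ⟨by simp [h], by norm_num⟩
  · -- y < c x
    have hdpos : 0 < c x - y := by linarith
    have hcxpos : 0 < c x := by linarith
    set T1 := Real.log (c x / (c x - y)) + 1 with hT1
    set T2 := tau x y + Real.log ((|x| + 1) / γ) with hT2
    refine ⟨max 0 (max T1 T2), le_max_left _ _, fun t ht => ?_⟩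
    have ht1 : T1 ≤ t := le_trans (le_trans (le_max_left _ _) (le_max_right _ _)) ht
    have ht2 : T2 ≤ t := le_trans (le_trans (le_max_right _ _) (le_max_right _ _)) ht
    rw [hT1] at ht1
    rw [hT2] at ht2
    have hneg : hh t x y < 0 := by
      unfold hh
      have h1 : c x / (c x - y) < Real.exp t := by
        calc c x / (c x - y) = Real.exp (Real.log (c x / (c x - y))) :=
              (Real.exp_log (div_pos hcxpos hdpos)).symm
          _ < Real.exp t := Real.exp_lt_exp.mpr (by linarith)
      have h2 : c x < Real.exp t * (c x - y) := (div_lt_iff₀ hdpos).mp h1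
      nlinarith
    unfold phi
    rw [if_neg (not_le.mpr hneg)]
    have hfrac : (0:ℝ) < (|x| + 1) / γ := div_pos (by positivity) (by linarith)
    have he : Real.exp (tau x y - t) ≤ γ / (|x| + 1) := by
      have h1 : tau x y - t ≤ -Real.log ((|x| + 1) / γ) := by
        linarith
      calc Real.exp (tau x y - t) ≤ Real.exp (-Real.log ((|x| + 1) / γ)) :=
            Real.exp_le_exp.mpr h1
        _ = γ / (|x| + 1) := by rw [Real.exp_neg, Real.exp_log hfrac, inv_div]
    have he2 : Real.exp (tau x y - t) * (|x| + 1) ≤ γ :=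
      (le_div_iff₀ (by positivity)).mp he
    have hb : |x * Real.exp (tau x y - t)| ≤ γ := by
      rw [abs_mul, abs_of_pos (Real.exp_pos _)]
      nlinarith [Real.exp_pos (tau x y - t), abs_nonneg x]
    exact Or.inl (Or.inl ⟨Set.mem_Icc.mpr (abs_le.mp hb), rfl⟩)
end
end

section
/- For the flow φ_t on E = ℝ × [0,1] and any two initial points on the x-axis, the ρ-distance between their trajectories can tend to infinity: if x ≠ x', then for trajectories x(t) = x e^{−t} + f(t), x'(t) = x' e^{−t} + f(t) along any continuous f with limsup_{t→∞} f(t) = ∞ and H(u) = exp(exp(exp(u))) for large u, we have limsup_{t→∞} |H(x(t)) − H(x'(t))| = ∞. -/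
open Filter

private lemma exp_gap' (X Y : ℝ) : (X - Y) * Real.exp Y ≤ Real.exp X - Real.exp Y := by
  have key : Real.exp (X - Y) * Real.exp Y = Real.exp X := by
    rw [← Real.exp_add]; ring_nf
  nlinarith [Real.add_one_le_exp (X - Y), (Real.exp_pos Y).le]

private lemma triple_gap' {A B : ℝ} (hB : 0 ≤ B) (hAB : B ≤ A) :
    (A - B) * Real.exp (Real.exp (Real.exp B)) ≤
      Real.exp (Real.exp (Real.exp A)) - Real.exp (Real.exp (Real.exp B)) := by
  have h1 : (A - B) ≤ Real.exp A - Real.exp B := by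
    have h := exp_gap' A B
    have h1 : 1 ≤ Real.exp B := Real.one_le_exp hB
    nlinarith
  have h2 : Real.exp A - Real.exp B ≤ Real.exp (Real.exp A) - Real.exp (Real.exp B) := by
    have h := exp_gap' (Real.exp A) (Real.exp B)
    have h1 : 1 ≤ Real.exp (Real.exp B) := Real.one_le_exp (Real.exp_pos B).le
    have h2 : Real.exp B ≤ Real.exp A := Real.exp_le_exp.2 hAB
    nlinarith
  have h3 := exp_gap' (Real.exp (Real.exp A)) (Real.exp (Real.exp B))
  have hmono2 : Real.exp (Real.exp B) ≤ Real.exp (Real.exp A) :=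
    Real.exp_le_exp.2 (Real.exp_le_exp.2 hAB)
  nlinarith [(Real.exp_pos (Real.exp (Real.exp B))).le]

set_option maxHeartbeats 1600000 in
/-- two distinct trajectories on the axis, `x(t) = x e^{−t} + f(t)`
and `x'(t) = x' e^{−t} + f(t)` with `x ≠ x'`, driven by a continuous `f` whose
limsup compares to `√(log t)` (frequently `f(t) ≥ α √(log t)` for some `α > 0`),
become infinitely far apart in the metric `ρ`: for `H` strictly increasing,
continuous, with `H(u) = exp(exp(exp u))` for `u ≥ M`, we have
`limsup_{t→∞} |H(x(t)) − H(x'(t))| = ∞`. -/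
theorem trajectories_rho_distance_unbounded (H : ℝ → ℝ) (M : ℝ)
    (hmono : StrictMono H) (hcont : Continuous H)
    (hH : ∀ u : ℝ, M ≤ u → H u = Real.exp (Real.exp (Real.exp u)))
    (f : ℝ → ℝ) (hf : Continuous f)
    (hgrow : ∃ α : ℝ, 0 < α ∧ ∃ᶠ t in atTop, α * Real.sqrt (Real.log t) ≤ f t)
    (x x' : ℝ) (hxx : x ≠ x') :
    ∀ C : ℝ, ∃ᶠ t in atTop,
      C < |H (x * Real.exp (-t) + f t) - H (x' * Real.exp (-t) + f t)| := by
  intro C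
  obtain ⟨α, hα, hfreq⟩ := hgrow
  have hd0 : (0:ℝ) < |x - x'| := abs_pos.2 (sub_ne_zero.2 hxx)
  set d := |x - x'| with hd
  set m := max |x| |x'| with hm
  set L := max M 0 with hL
  set R := Real.log (max C 0 / d + 1) with hR
  have hm0 : 0 ≤ m := le_trans (abs_nonneg x) (le_max_left _ _)
  clear_value d m L R
  -- tendsto facts
  have hsqrt : Tendsto Real.sqrt atTop atTop := by
    rw [tendsto_atTop]
    intro b
    filter_upwards [eventually_ge_atTop (max b 0 ^ 2)] with u hu
    have h0 : 0 ≤ max b 0 := le_max_right _ _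
    have h1 := Real.sqrt_le_sqrt hu
    rw [Real.sqrt_sq h0] at h1
    exact (le_max_left b 0).trans h1
  have hlog : Tendsto Real.log atTop atTop := Real.tendsto_log_atTop
  have hg : Tendsto (fun t => α * Real.sqrt (Real.log t)) atTop atTop :=
    (hsqrt.comp hlog).const_mul_atTop hα
  have e1 : ∀ᶠ t : ℝ in atTop, (1:ℝ) ≤ t := eventually_ge_atTop 1
  have e2 : ∀ᶠ t : ℝ in atTop, max (L + m) (2 * m) ≤ α * Real.sqrt (Real.log t) :=
    hg.eventually_ge_atTop _
  have e3 : ∀ᶠ t : ℝ in atTop, max (2 * (8 / α) ^ 4) (max R 0) ≤ Real.log t :=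
    hlog.eventually_ge_atTop _
  refine ((hfreq.and_eventually (e1.and (e2.and e3))).mono ?_)
  rintro t ⟨hft, ht1, hα2, hs3⟩
  set s := Real.log t with hs
  have hs0 : 0 ≤ s := Real.log_nonneg ht1
  have ht0 : (0:ℝ) < t := lt_of_lt_of_le zero_lt_one ht1
  have hts : Real.exp s = t := Real.exp_log ht0
  have hsqs : Real.sqrt s * Real.sqrt s = s := Real.mul_self_sqrt hs0
  have hsqnn : 0 ≤ Real.sqrt s := Real.sqrt_nonneg s
  clear_value s
  set w := α * Real.sqrt s - m with hw
  clear_value w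
  have hLw : L ≤ w := by
    have h := le_trans (le_max_left (L + m) (2 * m)) hα2
    simp only [hw]; linarith
  have hw2 : α * Real.sqrt s / 2 ≤ w := by
    have h := le_trans (le_max_right (L + m) (2 * m)) hα2
    simp only [hw]; linarith
  have h0L : 0 ≤ L := by rw [hL]; exact le_max_right M 0
  have hML : M ≤ L := by rw [hL]; exact le_max_left M 0
  have hw0 : 0 ≤ w := le_trans h0L hLw
  have hMw : M ≤ w := le_trans hML hLw
  -- exp w ≥ 2 s
  have hew : 2 * s ≤ Real.exp w := by
    have h4 : Real.exp w = Real.exp (w / 4) ^ (4:ℕ) := by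
      rw [← Real.exp_nat_mul]
      norm_num
      ring_nf
    have hq := Real.add_one_le_exp (w / 4)
    have hsbig : 2 * (8 / α) ^ 4 ≤ s := le_trans (le_max_left _ _) hs3
    set y := α * Real.sqrt s / 8 with hy
    have hy0 : 0 ≤ y := by positivity
    have hyw : y ≤ Real.exp (w / 4) := by
      have : 4 * y ≤ w := by simp only [hy]; linarith
      linarith
    have h5 : y ^ (4:ℕ) ≤ Real.exp (w / 4) ^ (4:ℕ) := pow_le_pow_left₀ hy0 hyw 4
    have hy4 : y ^ (4:ℕ) = (α / 8) ^ (4:ℕ) * s ^ 2 := by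
      have h6 : y ^ (4:ℕ) = (α / 8) ^ (4:ℕ) * (Real.sqrt s * Real.sqrt s) ^ 2 := by
        simp only [hy]; ring
      rw [h6, hsqs]
    have hkey : (α / 8 : ℝ) ^ (4:ℕ) * (8 / α) ^ (4:ℕ) = 1 := by
      field_simp
    have hp4 : (0:ℝ) < (α / 8) ^ (4:ℕ) := by positivity
    have hmul : (α / 8) ^ (4:ℕ) * (2 * (8 / α) ^ 4) * s ≤ (α / 8) ^ (4:ℕ) * s * s := by
      have := mul_le_mul_of_nonneg_left hsbig hp4.le
      nlinarith
    have : (2:ℝ) * s ≤ (α / 8) ^ (4:ℕ) * s ^ 2 := by nlinarith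
    calc 2 * s ≤ (α / 8) ^ (4:ℕ) * s ^ 2 := this
      _ = y ^ (4:ℕ) := hy4.symm
      _ ≤ Real.exp (w / 4) ^ (4:ℕ) := h5
      _ = Real.exp w := h4.symm
  -- exp (exp w) ≥ t + R
  have htR : t + R ≤ Real.exp (Real.exp w) := by
    have hRmax : max R 0 ≤ s := le_trans (le_max_right _ _) hs3
    have hes : 1 + max R 0 ≤ Real.exp s := by
      have := Real.add_one_le_exp s
      linarith
    have he2 : Real.exp (2 * s) = Real.exp s * Real.exp s := by
      rw [← Real.exp_add]; ring_nf
    have h2s : Real.exp s + R ≤ Real.exp (2 * s) := by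
      have h1 := le_max_left R 0
      have h2 := le_max_right R 0
      nlinarith [Real.exp_pos s]
    have h3 := Real.exp_le_exp.2 hew
    rw [← hts]; linarith
  -- set up trajectories
  set B := min x x' * Real.exp (-t) + f t with hB
  set A := max x x' * Real.exp (-t) + f t with hA
  clear_value B A
  have het : Real.exp (-t) ≤ 1 := by
    rw [show (1:ℝ) = Real.exp 0 by simp]
    exact Real.exp_le_exp.2 (by linarith)
  have hetp : 0 < Real.exp (-t) := Real.exp_pos _
  have hminabs : |min x x'| ≤ m := by rw [hm]; exact abs_min_le_max_abs_abs
  have hwB : w ≤ B := by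
    have h1 : -m * Real.exp (-t) ≤ min x x' * Real.exp (-t) :=
      mul_le_mul_of_nonneg_right (by linarith [neg_abs_le (min x x')]) hetp.le
    have h2 : -m * 1 ≤ -m * Real.exp (-t) :=
      mul_le_mul_of_nonpos_left het (by linarith)
    simp only [hB, hw]
    have hft' : α * Real.sqrt s ≤ f t := hft
    linarith
  have hMB : M ≤ B := le_trans hMw hwB
  have hBA : B ≤ A := by
    have h := min_le_max (a := x) (b := x')
    simp only [hA, hB]
    nlinarith
  have hMA : M ≤ A := hMB.trans hBA
  have hABd : A - B = d * Real.exp (-t) := by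
    have h1 : A - B = (max x x' - min x x') * Real.exp (-t) := by
      simp only [hA, hB]; ring
    rw [h1, max_sub_min_eq_abs, hd, abs_sub_comm]
  -- reduce to A, B
  have habs : |H (x * Real.exp (-t) + f t) - H (x' * Real.exp (-t) + f t)|
      = |H A - H B| := by
    rcases le_total x x' with h | h
    · rw [hA, hB, max_eq_right h, min_eq_left h, abs_sub_comm]
    · rw [hA, hB, max_eq_left h, min_eq_right h]
  rw [habs]
  have key := triple_gap' (hw0.trans hwB) hBA
  have hBw3 : Real.exp (t + R) ≤ Real.exp (Real.exp (Real.exp B)) := by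
    have h1 : Real.exp (Real.exp w) ≤ Real.exp (Real.exp B) :=
      Real.exp_le_exp.2 (Real.exp_le_exp.2 hwB)
    exact Real.exp_le_exp.2 (htR.trans h1)
  have hfinal : d * Real.exp R ≤ H A - H B := by
    rw [hH A hMA, hH B hMB]
    have h1 : d * Real.exp (-t) * Real.exp (t + R)
        ≤ (A - B) * Real.exp (Real.exp (Real.exp B)) := by
      rw [hABd]
      exact mul_le_mul_of_nonneg_left hBw3 (by positivity)
    have h2 : d * Real.exp (-t) * Real.exp (t + R) = d * Real.exp R := by
      rw [mul_assoc, ← Real.exp_add]; ring_nf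
    linarith
  have hCd : C < d * Real.exp R := by
    have hpos : (0:ℝ) < max C 0 / d + 1 := by positivity
    rw [hR, Real.exp_log hpos]
    have h1 : d * (max C 0 / d + 1) = max C 0 + d := by field_simp
    rw [h1]
    have := le_max_left C 0
    linarith
  have := le_abs_self (H A - H B)
  linarith
end
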